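/- Let K be a field, h ∈ K* not a square in K, σ ∈ PGL(2,K) the class of [[0,h],[1,0]], and N_σ⁰ the group of classes of invertible matrices [[a, bh],[b, a]] with a,b ∈ K. Then the map sending the class of [[a, bh],[b, a]] to the class of a + b√h in K(√h)*/K* is a group isomorphism from N_σ⁰ onto K(√h)*/K*. -/

import Mathlib

set_option maxHeartbeats 1000000
open Polynomial

/-- `PGL₂ K`: `GL(2,K)` modulo its center (the scalar matrices). -/
abbrev PGL2 (K : Type*) [Field K] :=
  GL (Fin 2) K ⧸ Subgroup.center (GL (Fin 2) K)

namespace PGLaux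
variable {K : Type*} [Field K] {h : K}

theorem root_sq : (AdjoinRoot.root (X ^ 2 - C h)) ^ 2 = algebraMap K _ h := by
  have h0 := AdjoinRoot.mk_self (f := X ^ 2 - C h)
  have : AdjoinRoot.mk (X ^ 2 - C h) (X ^ 2) - AdjoinRoot.mk (X ^ 2 - C h) (C h) = 0 := by
    rw [← map_sub]; exact h0
  rw [sub_eq_zero] at this
  simpa [map_pow, AdjoinRoot.mk_X, AdjoinRoot.mk_C, AdjoinRoot.algebraMap_eq] using this

theorem indep [Fact (Irreducible (X ^ 2 - C h))] (hns : ¬∃ s : K, s ^ 2 = h)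
    {a b : K}
    (hab : algebraMap K (AdjoinRoot (X ^ 2 - C h)) a
      + algebraMap K (AdjoinRoot (X ^ 2 - C h)) b * AdjoinRoot.root (X ^ 2 - C h) = 0) :
    a = 0 ∧ b = 0 := by
  have hinj := (algebraMap K (AdjoinRoot (X ^ 2 - C h))).injective
  by_cases hb : b = 0
  · subst hb
    simp only [map_zero, zero_mul, add_zero] at hab
    exact ⟨by simpa using hinj (by simpa using hab), rfl⟩
  · exfalso
    apply hns
    have key : algebraMap K (AdjoinRoot (X ^ 2 - C h)) b * AdjoinRoot.root (X ^ 2 - C h)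
        = - algebraMap K (AdjoinRoot (X ^ 2 - C h)) a := by linear_combination hab
    have h2 : (algebraMap K (AdjoinRoot (X ^ 2 - C h))) (b ^ 2 * h)
        = (algebraMap K (AdjoinRoot (X ^ 2 - C h))) (a ^ 2) := by
      rw [map_mul, map_pow, map_pow, ← root_sq]
      linear_combination (algebraMap K (AdjoinRoot (X ^ 2 - C h)) b * AdjoinRoot.root (X ^ 2 - C h)
        - algebraMap K (AdjoinRoot (X ^ 2 - C h)) a) * key
    have h3 : b ^ 2 * h = a ^ 2 := hinj h2
    have : (a / b) ^ 2 = h := by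
      rw [div_pow, ← h3, mul_comm, mul_div_assoc, div_self (pow_ne_zero 2 hb), mul_one]
    exact ⟨a / b, this⟩

theorem span [Fact (Irreducible (X ^ 2 - C h))] (z : AdjoinRoot (X ^ 2 - C h)) :
    ∃ a b : K, z = algebraMap K _ a + algebraMap K _ b * AdjoinRoot.root (X ^ 2 - C h) := by
  obtain ⟨p, rfl⟩ := AdjoinRoot.mk_surjective z
  have hmonic : (X ^ 2 - C h).Monic := monic_X_pow_sub_C h two_ne_zero
  set r := p %ₘ (X ^ 2 - C h) with hr
  have hdeg : r.degree < 2 := by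
    have := degree_modByMonic_lt p hmonic
    rwa [degree_X_pow_sub_C (by norm_num) h] at this
  have hdeg1 : r.degree ≤ 1 := by
    rcases hd : r.degree with _ | n
    · exact bot_le
    · rw [hd] at hdeg
      rw [show ((2 : WithBot ℕ)) = ((2 : ℕ) : WithBot ℕ) from rfl] at hdeg
      rw [show ((1 : WithBot ℕ)) = ((1 : ℕ) : WithBot ℕ) from rfl]
      exact WithBot.coe_le_coe.mpr (Nat.lt_succ_iff.mp (WithBot.coe_lt_coe.mp hdeg))
  refine ⟨r.coeff 0, r.coeff 1, ?_⟩
  have hmk : AdjoinRoot.mk (X ^ 2 - C h) p = AdjoinRoot.mk (X ^ 2 - C h) r := by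
    conv_lhs => rw [← modByMonic_add_div p (X ^ 2 - C h)]
    simp [← hr, AdjoinRoot.mk_self]
  rw [hmk]
  conv_lhs => rw [eq_X_add_C_of_degree_le_one hdeg1]
  simp [AdjoinRoot.mk_C, AdjoinRoot.mk_X, AdjoinRoot.algebraMap_eq]
  ring

variable [Fact (Irreducible (X ^ 2 - C h))]

/-- first coordinate -/
noncomputable def co1 (z : AdjoinRoot (X ^ 2 - C h)) : K := (span z).choose

noncomputable def co2 (z : AdjoinRoot (X ^ 2 - C h)) : K := (span z).choose_spec.choose

theorem co_spec (z : AdjoinRoot (X ^ 2 - C h)) :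
    z = algebraMap K _ (co1 z) + algebraMap K _ (co2 z) * AdjoinRoot.root (X ^ 2 - C h) :=
  (span z).choose_spec.choose_spec

theorem co_unique (hns : ¬∃ s : K, s ^ 2 = h) {z : AdjoinRoot (X ^ 2 - C h)} {a b : K}
    (hz : z = algebraMap K _ a + algebraMap K _ b * AdjoinRoot.root (X ^ 2 - C h)) :
    co1 z = a ∧ co2 z = b := by
  have h0 : algebraMap K (AdjoinRoot (X ^ 2 - C h)) (co1 z - a)
      + algebraMap K _ (co2 z - b) * AdjoinRoot.root (X ^ 2 - C h) = 0 := by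
    rw [map_sub, map_sub]
    have hs := co_spec z
    linear_combination hz - hs
  obtain ⟨h1, h2⟩ := indep hns h0
  exact ⟨sub_eq_zero.mp h1, sub_eq_zero.mp h2⟩

theorem det_mat_ne (hns : ¬∃ s : K, s ^ 2 = h) {z : AdjoinRoot (X ^ 2 - C h)} (hz : z ≠ 0) :
    (!![co1 z, co2 z * h; co2 z, co1 z] : Matrix (Fin 2) (Fin 2) K).det ≠ 0 := by
  rw [Matrix.det_fin_two_of]
  intro hdet
  by_cases hb : co2 z = 0
  · have ha : co1 z = 0 := by
      have : co1 z * co1 z = 0 := by rw [hb] at hdet; linear_combination hdet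
      exact mul_self_eq_zero.mp this
    apply hz
    have := co_spec z
    rw [ha, hb] at this
    simpa using this
  · apply hns
    refine ⟨co1 z / co2 z, ?_⟩
    have h3 : co1 z ^ 2 = co2 z ^ 2 * h := by linear_combination hdet
    rw [div_pow, h3, mul_comm, mul_div_assoc, div_self (pow_ne_zero 2 hb), mul_one]

/-- the matrix homomorphism `K(√h)ˣ →* GL₂(K)` -/
noncomputable def Phi0 (hns : ¬∃ s : K, s ^ 2 = h) :
    (AdjoinRoot (X ^ 2 - C h))ˣ →* GL (Fin 2) K where
  toFun u := Matrix.GeneralLinearGroup.mkOfDetNeZero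
    !![co1 (u : AdjoinRoot (X ^ 2 - C h)), co2 (u : AdjoinRoot (X ^ 2 - C h)) * h;
       co2 (u : AdjoinRoot (X ^ 2 - C h)), co1 (u : AdjoinRoot (X ^ 2 - C h))]
    (det_mat_ne hns u.ne_zero)
  map_one' := by
    apply Units.ext
    obtain ⟨h1, h2⟩ := co_unique hns (z := (1 : AdjoinRoot (X ^ 2 - C h))) (a := 1) (b := 0)
      (by simp)
    show !![co1 ((1 : (AdjoinRoot (X ^ 2 - C h))ˣ) : AdjoinRoot (X ^ 2 - C h)), _ * h; _, _]
        = (1 : Matrix (Fin 2) (Fin 2) K)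
    rw [Units.val_one] at *
    rw [h1, h2, Matrix.one_fin_two]
    norm_num
  map_mul' u v := by
    apply Units.ext
    have hc : ((u * v : (AdjoinRoot (X ^ 2 - C h))ˣ) : AdjoinRoot (X ^ 2 - C h))
        = algebraMap K _ (co1 (u : AdjoinRoot (X ^ 2 - C h)) * co1 (v : AdjoinRoot (X ^ 2 - C h))
            + co2 (u : AdjoinRoot (X ^ 2 - C h)) * co2 (v : AdjoinRoot (X ^ 2 - C h)) * h)
          + algebraMap K _ (co1 (u : AdjoinRoot (X ^ 2 - C h)) * co2 (v : AdjoinRoot (X ^ 2 - C h))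
            + co2 (u : AdjoinRoot (X ^ 2 - C h)) * co1 (v : AdjoinRoot (X ^ 2 - C h)))
            * AdjoinRoot.root (X ^ 2 - C h) := by
      conv_lhs => rw [Units.val_mul,
        co_spec ((u : (AdjoinRoot (X ^ 2 - C h))ˣ) : AdjoinRoot (X ^ 2 - C h)),
        co_spec ((v : (AdjoinRoot (X ^ 2 - C h))ˣ) : AdjoinRoot (X ^ 2 - C h))]
      simp only [map_add, map_mul]
      linear_combination (algebraMap K (AdjoinRoot (X ^ 2 - C h))
          (co2 (u : AdjoinRoot (X ^ 2 - C h)))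
        * algebraMap K (AdjoinRoot (X ^ 2 - C h)) (co2 (v : AdjoinRoot (X ^ 2 - C h)))) * root_sq (h := h)
    obtain ⟨h1, h2⟩ := co_unique hns hc
    show (!![_, _; _, _] : Matrix (Fin 2) (Fin 2) K) = (!![_, _; _, _] : Matrix (Fin 2) (Fin 2) K)
      * (!![_, _; _, _] : Matrix (Fin 2) (Fin 2) K)
    rw [Matrix.mul_fin_two, h1, h2]
    congr 1 <;> ring

theorem phi0_coe (hns : ¬∃ s : K, s ^ 2 = h) (u : (AdjoinRoot (X ^ 2 - C h))ˣ) :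
    ((Phi0 hns u : GL (Fin 2) K) : Matrix (Fin 2) (Fin 2) K)
      = !![co1 (u : AdjoinRoot (X ^ 2 - C h)), co2 (u : AdjoinRoot (X ^ 2 - C h)) * h;
           co2 (u : AdjoinRoot (X ^ 2 - C h)), co1 (u : AdjoinRoot (X ^ 2 - C h))] := rfl

theorem ker_eq (hns : ¬∃ s : K, s ^ 2 = h) :
    ((QuotientGroup.mk' (Subgroup.center (GL (Fin 2) K))).comp (Phi0 hns)).ker
      = (Units.map (algebraMap K (AdjoinRoot (X ^ 2 - C h))).toMonoidHom).range := by
  ext u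
  rw [MonoidHom.mem_ker, MonoidHom.comp_apply, QuotientGroup.mk'_apply,
    QuotientGroup.eq_one_iff]
  constructor
  · intro hu
    set E : GL (Fin 2) K := Matrix.GeneralLinearGroup.mkOfDetNeZero !![1, 1; 0, 1]
      (by simp [Matrix.det_fin_two_of]) with hE
    have hcom := Subgroup.mem_center_iff.mp hu E
    have hmat := congrArg Units.val hcom
    rw [Units.val_mul, Units.val_mul, phi0_coe] at hmat
    have hEc : (E : Matrix (Fin 2) (Fin 2) K) = !![1, 1; 0, 1] := rfl
    rw [hEc, Matrix.mul_fin_two, Matrix.mul_fin_two, ← Matrix.ext_iff] at hmat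
    have h00 := hmat 0 0
    simp at h00
    -- h00 should give co2 ↑u = 0
    have hb : co2 ((u : (AdjoinRoot (X ^ 2 - C h))ˣ) : AdjoinRoot (X ^ 2 - C h)) = 0 := by
      linear_combination h00
    have hval : ((u : (AdjoinRoot (X ^ 2 - C h))ˣ) : AdjoinRoot (X ^ 2 - C h))
        = algebraMap K _ (co1 ((u : (AdjoinRoot (X ^ 2 - C h))ˣ) : AdjoinRoot (X ^ 2 - C h))) := by
      have := co_spec ((u : (AdjoinRoot (X ^ 2 - C h))ˣ) : AdjoinRoot (X ^ 2 - C h))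
      rw [hb] at this
      simpa using this
    have hco1 : co1 ((u : (AdjoinRoot (X ^ 2 - C h))ˣ) : AdjoinRoot (X ^ 2 - C h)) ≠ 0 := by
      intro h0
      apply u.ne_zero
      rw [hval, h0, map_zero]
    exact ⟨Units.mk0 _ hco1, Units.ext hval.symm⟩
  · rintro ⟨w, rfl⟩
    obtain ⟨h1, h2⟩ := co_unique hns
      (z := ((Units.map (algebraMap K (AdjoinRoot (X ^ 2 - C h))).toMonoidHom w :
        (AdjoinRoot (X ^ 2 - C h))ˣ) : AdjoinRoot (X ^ 2 - C h)))
      (a := (w : K)) (b := 0) (by simp)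
    rw [Subgroup.mem_center_iff]
    intro g
    apply Units.ext
    rw [Units.val_mul, Units.val_mul, phi0_coe, h1, h2]
    have hscal : (!![(w : K), 0 * h; 0, (w : K)] : Matrix (Fin 2) (Fin 2) K)
        = Matrix.scalar (Fin 2) (w : K) := by
      rw [Matrix.scalar_apply]
      ext i j
      fin_cases i <;> fin_cases j <;> simp [Matrix.diagonal]
    rw [hscal]
    exact (Matrix.scalar_commute (w : K) (fun r => mul_comm _ r) _).symm

end PGLaux

/-- Let `K` be a field, `h ∈ K*` not a square, `σ` the class of
`[[0,h],[1,0]]` in `PGL(2,K)`, and `N_σ⁰` the group of classes of the invertible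
matrices `[[a,bh],[b,a]]`. Then sending the class of `[[a,bh],[b,a]]` to the class of
`a + b√h` is a group isomorphism from `N_σ⁰` onto `K(√h)*/K*`, where
`K(√h) = K[X]/(X² - h)`. -/
theorem pgl2_centralizer_iso_quadratic_extension
    (K : Type*) [Field K] (h : K) (hh : h ≠ 0)
    (hns : ¬∃ s : K, s ^ 2 = h)
    [Fact (Irreducible (X ^ 2 - C h))]
    (N0 : Subgroup (PGL2 K))
    (hN0 : ∀ x : PGL2 K, x ∈ N0 ↔
      ∃ (m : GL (Fin 2) K) (a b : K),
        (m : Matrix (Fin 2) (Fin 2) K) = !![a, b * h; b, a] ∧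
        x = QuotientGroup.mk m) :
    ∃ φ : N0 ≃* ((AdjoinRoot (X ^ 2 - C h))ˣ ⧸
        (Units.map (algebraMap K (AdjoinRoot (X ^ 2 - C h))).toMonoidHom).range),
      ∀ (m : GL (Fin 2) K) (a b : K),
        (m : Matrix (Fin 2) (Fin 2) K) = !![a, b * h; b, a] →
        ∀ (hx : (QuotientGroup.mk m : PGL2 K) ∈ N0)
          (u : (AdjoinRoot (X ^ 2 - C h))ˣ),
          (u : AdjoinRoot (X ^ 2 - C h)) =
            algebraMap K (AdjoinRoot (X ^ 2 - C h)) a +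
              algebraMap K (AdjoinRoot (X ^ 2 - C h)) b * AdjoinRoot.root (X ^ 2 - C h) →
          φ ⟨QuotientGroup.mk m, hx⟩ = QuotientGroup.mk u := by
  classical
  set Φ : (AdjoinRoot (X ^ 2 - C h))ˣ →* PGL2 K :=
    (QuotientGroup.mk' (Subgroup.center (GL (Fin 2) K))).comp (PGLaux.Phi0 hns) with hΦ
  have hker : Φ.ker = (Units.map (algebraMap K (AdjoinRoot (X ^ 2 - C h))).toMonoidHom).range :=
    PGLaux.ker_eq hns
  have hrange : Φ.range = N0 := by
    ext x
    rw [hN0]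
    constructor
    · rintro ⟨u, rfl⟩
      exact ⟨PGLaux.Phi0 hns u, PGLaux.co1 (u : AdjoinRoot (X ^ 2 - C h)),
        PGLaux.co2 (u : AdjoinRoot (X ^ 2 - C h)), PGLaux.phi0_coe hns u, rfl⟩
    · rintro ⟨m, a, b, hm, rfl⟩
      have hdet : ((m : Matrix (Fin 2) (Fin 2) K)).det ≠ 0 := by
        intro h0
        have h1 := m.mul_inv
        have h2 := congrArg Matrix.det h1
        rw [Matrix.det_mul, h0, zero_mul, Matrix.det_one] at h2
        exact zero_ne_one h2
      set z := algebraMap K (AdjoinRoot (X ^ 2 - C h)) a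
        + algebraMap K (AdjoinRoot (X ^ 2 - C h)) b * AdjoinRoot.root (X ^ 2 - C h) with hz
      have hz0 : z ≠ 0 := by
        intro h0
        obtain ⟨ha, hb⟩ := PGLaux.indep hns (hz ▸ h0)
        apply hdet
        rw [hm, ha, hb]
        simp [Matrix.det_fin_two_of]
      refine ⟨Units.mk0 z hz0, ?_⟩
      have hPhiu : PGLaux.Phi0 hns (Units.mk0 z hz0) = m := by
        apply Units.ext
        rw [PGLaux.phi0_coe, hm]
        obtain ⟨h1, h2⟩ := PGLaux.co_unique hns (z := z) (a := a) (b := b) hz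
        rw [Units.val_mk0, h1, h2]
      show QuotientGroup.mk' _ (PGLaux.Phi0 hns (Units.mk0 z hz0)) = QuotientGroup.mk m
      rw [hPhiu]
      rfl
  refine ⟨((QuotientGroup.quotientMulEquivOfEq hker.symm).trans
      ((QuotientGroup.quotientKerEquivRange Φ).trans (MulEquiv.subgroupCongr hrange))).symm, ?_⟩
  intro m a b hm hx u hu
  rw [MulEquiv.symm_apply_eq]
  obtain ⟨h1, h2⟩ := PGLaux.co_unique hns (z := (u : AdjoinRoot (X ^ 2 - C h)))
    (a := a) (b := b) hu
  have hPhi0 : PGLaux.Phi0 hns u = m := Units.ext (by rw [PGLaux.phi0_coe, h1, h2, hm])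
  symm
  apply Subtype.ext
  rw [MulEquiv.trans_apply, MulEquiv.trans_apply, QuotientGroup.quotientMulEquivOfEq_mk,
    MulEquiv.subgroupCongr_apply]
  show ((QuotientGroup.quotientKerEquivRange Φ (QuotientGroup.mk u) : Φ.range) : PGL2 K)
    = QuotientGroup.mk m
  have hval : ((QuotientGroup.quotientKerEquivRange Φ (QuotientGroup.mk u) : Φ.range) : PGL2 K)
      = Φ u := rfl
  rw [hval, hΦ]
  show QuotientGroup.mk' _ (PGLaux.Phi0 hns u) = _
  rw [hPhi0]
  rfl
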